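/- Every infinite ascending chain S for a linear order ≤_L on ω contains an infinite subset S' ⊆ S that is an ascending sequence for ≤_L (i.e., for all x, y ∈ S', x ≤ y implies x ≤_L y). -/
import Mathlib


/-- Every infinite ascending chain S for a linear order ≤_L on ω contains an
infinite subset S' that is an ascending sequence for ≤_L. -/
theorem ascending_chain_contains_ascending_sequence (L : LinearOrder ℕ)
    (S : Set ℕ) (hS : S.Infinite)
    (hchain : ∀ x ∈ S, {y ∈ S | L.le y x}.Finite) :
    ∃ S' ⊆ S, S'.Infinite ∧ ∀ x ∈ S', ∀ y ∈ S', x ≤ y → L.le x y := by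
  classical
  have key : ∀ x ∈ S, ∃ y ∈ S, x < y ∧ ¬ L.le y x := by
    intro x hx
    have hfin : ({y ∈ S | L.le y x} ∪ {y | y ≤ x}).Finite :=
      (hchain x hx).union (Set.finite_le_nat x)
    obtain ⟨y, hyS, hy⟩ := (hS.diff hfin).nonempty
    refine ⟨y, hyS, ?_, fun h => hy (Or.inl ⟨hyS, h⟩)⟩
    exact Nat.lt_of_not_le fun h => hy (Or.inr h)
  choose! Y hY1 hY2 hY3 using key
  obtain ⟨x0, hx0⟩ := hS.nonempty
  let f : ℕ → ℕ := fun n => Nat.rec x0 (fun _ prev => Y prev) n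
  have hfS : ∀ n, f n ∈ S := by
    intro n
    induction n with
    | zero => exact hx0
    | succ n ih => exact hY1 _ ih
  have hstep : ∀ n, f n < f (n + 1) ∧ ¬ L.le (f (n + 1)) (f n) :=
    fun n => ⟨hY2 _ (hfS n), hY3 _ (hfS n)⟩
  have hmono : StrictMono f := strictMono_nat_of_lt_succ fun n => (hstep n).1
  have hLmono : ∀ m n : ℕ, m ≤ n → L.le (f m) (f n) := by
    intro m n h
    induction n with
    | zero => exact Nat.le_zero.mp h ▸ L.le_refl _
    | succ n ih =>
      have h2 : L.le (f n) (f (n + 1)) :=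
        (L.le_total (f (n+1)) (f n)).resolve_left (hstep n).2
      rcases Nat.le_succ_iff.mp h with h | h
      · exact L.le_trans _ _ _ (ih h) h2
      · exact h ▸ L.le_refl _
  have hinj : Function.Injective f := by
    intro a b hab
    by_contra hne
    rcases Nat.lt_or_ge a b with h | h
    · exact Nat.ne_of_lt (hmono h) hab
    · exact Nat.ne_of_lt (hmono (Nat.lt_of_le_of_ne h fun e => hne e.symm)) hab.symm
  refine ⟨Set.range f, ?_, Set.infinite_range_of_injective hinj, ?_⟩
  · rintro _ ⟨n, rfl⟩; exact hfS n
  · rintro _ ⟨m, rfl⟩ _ ⟨n, rfl⟩ hle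
    rcases Nat.lt_or_ge m n with h | h
    · exact hLmono m n (Nat.le_of_lt h)
    · have := Nat.le_antisymm hle (hmono.monotone h)
      rw [this]
      exact L.le_refl _
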